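/- Let g ≥ 1 and m ≥ 2 be integers and set q = g·m. Then for every integer a, the Lee weight in ZMod q of g·a equals g times the Lee weight in ZMod m of a; that is, ‖g·a‖_q = g·‖a‖_m. -/
import Mathlib


/-- The Lee weight of `x : ZMod q`: `min(x.val, q - x.val)`. -/
def leeWt (q : ℕ) (x : ZMod q) : ℕ := min x.val (q - x.val)

/-- For `g ≥ 1`, `m ≥ 2`, `q = g·m`, and any integer `a`:
`‖g·a‖_q = g·‖a‖_m`. -/
theorem stmt5 (g m : ℕ) (hg : 1 ≤ g) (hm : 2 ≤ m) (a : ℤ) :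
    leeWt (g * m) ((((g : ℤ) * a : ℤ) : ZMod (g * m))) = g * leeWt m ((a : ZMod m)) := by
  have hm0 : m ≠ 0 := by omega
  have hg0 : g ≠ 0 := by omega
  haveI : NeZero m := ⟨hm0⟩
  haveI : NeZero (g * m) := ⟨by positivity⟩
  have hval : ((((g : ℤ) * a : ℤ) : ZMod (g * m))).val = g * ((a : ZMod m)).val := by
    have h1 : (((((g : ℤ) * a : ℤ) : ZMod (g * m))).val : ℤ) = ((g : ℤ) * a) % (g * m) :=
      ZMod.val_intCast _
    have h2 : ((((a : ℤ) : ZMod m)).val : ℤ) = a % m := ZMod.val_intCast _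
    have h3 : ((g : ℤ) * a) % ((g : ℤ) * m) = (g : ℤ) * (a % m) :=
      Int.mul_emod_mul_of_pos _ _ (by exact_mod_cast Nat.pos_of_ne_zero hg0)
    have : (((((g : ℤ) * a : ℤ) : ZMod (g * m))).val : ℤ) = ((g * ((a : ZMod m)).val : ℕ) : ℤ) := by
      push_cast at h1 ⊢
      rw [h1, h3, h2]
    exact_mod_cast this
  unfold leeWt
  rw [hval, ← Nat.mul_min_mul_left, Nat.mul_sub]
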